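/- For integer N ≥ 500 and 0 < x < 1/N, f(x) = N − 2(1 − (1−x)^N)/x + N(1−x)^{N−1} satisfies f(x) ≥ (2/25) N³ x². -/

import Mathlib

set_option maxHeartbeats 1000000

lemma desc5_nonneg (M : ℕ) :
    0 ≤ (M:ℝ)*((M:ℝ)-1)*((M:ℝ)-2)*((M:ℝ)-3)*((M:ℝ)-4) := by
  rcases le_or_gt M 4 with h | h
  · interval_cases M <;> norm_num
  · have h5 : (4:ℝ) < (M:ℝ) := by exact_mod_cast h
    have p0 : (0:ℝ) < (M:ℝ) := by linarith
    have p1 : (0:ℝ) < (M:ℝ)-1 := by linarith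
    have p2 : (0:ℝ) < (M:ℝ)-2 := by linarith
    have p3 : (0:ℝ) < (M:ℝ)-3 := by linarith
    have p4 : (0:ℝ) < (M:ℝ)-4 := by linarith
    exact le_of_lt (mul_pos (mul_pos (mul_pos (mul_pos p0 p1) p2) p3) p4)

/-- Odd (degree-5) truncation of the binomial series is a lower bound for `(1-x)^M`
on `[0,1]`. -/
lemma trunc5 (M : ℕ) (x : ℝ) (h0 : 0 ≤ x) (h1 : x ≤ 1) :
    1 - (M:ℝ)*x + (M:ℝ)*((M:ℝ)-1)/2*x^2 - (M:ℝ)*((M:ℝ)-1)*((M:ℝ)-2)/6*x^3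
      + (M:ℝ)*((M:ℝ)-1)*((M:ℝ)-2)*((M:ℝ)-3)/24*x^4
      - (M:ℝ)*((M:ℝ)-1)*((M:ℝ)-2)*((M:ℝ)-3)*((M:ℝ)-4)/120*x^5 ≤ (1-x)^M := by
  induction M with
  | zero => norm_num
  | succ M ih =>
    have hd := desc5_nonneg M
    have hx6 : 0 ≤ x^6 := by positivity
    have step : (1 - (M:ℝ)*x + (M:ℝ)*((M:ℝ)-1)/2*x^2
        - (M:ℝ)*((M:ℝ)-1)*((M:ℝ)-2)/6*x^3
        + (M:ℝ)*((M:ℝ)-1)*((M:ℝ)-2)*((M:ℝ)-3)/24*x^4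
        - (M:ℝ)*((M:ℝ)-1)*((M:ℝ)-2)*((M:ℝ)-3)*((M:ℝ)-4)/120*x^5) * (1-x)
        ≤ (1-x)^M * (1-x) :=
      mul_le_mul_of_nonneg_right ih (by linarith)
    have hpow : (1-x)^(M+1) = (1-x)^M * (1-x) := pow_succ _ _
    push_cast
    rw [hpow]
    nlinarith [mul_nonneg hd hx6]

/-- for `N ≥ 500` and `0 < x < 1/N`,
`f(x) = N - 2(1-(1-x)^N)/x + N(1-x)^{N-1} ≥ (2/25) N³ x²`. -/
theorem variance_f_lower_small_x (x : ℝ) (N : ℕ) (hN : 500 ≤ N) (hx0 : 0 < x)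
    (hx1 : x < 1 / (N : ℝ)) :
    (2 / 25) * (N : ℝ) ^ 3 * x ^ 2
      ≤ (N : ℝ) - 2 * (1 - (1 - x) ^ N) / x + (N : ℝ) * (1 - x) ^ (N - 1) := by
  set n : ℝ := (N : ℝ) with hn_def
  have hn : (500:ℝ) ≤ n := by rw [hn_def]; exact_mod_cast hN
  have hn0 : (0:ℝ) < n := by linarith
  have hxn : x * n < 1 := (lt_div_iff₀ hn0).mp hx1
  have hx1' : x ≤ 1 := by nlinarith
  have hm : ((N-1 : ℕ):ℝ) = n - 1 := by
    have h1 : 1 ≤ N := by omega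
    push_cast [h1]; ring
  have hL := trunc5 (N-1) x hx0.le hx1'
  rw [hm] at hL
  set p := (1-x)^(N-1) with hp_def
  have hpowN : (1-x)^N = p * (1-x) := by
    rw [hp_def, ← pow_succ]
    congr 1
    omega
  rw [hpowN]
  have key : n - 2*(1 - p*(1-x))/x + n*p = (n*x - 2 + (2+(n-2)*x)*p)/x := by
    field_simp
    ring
  rw [key, le_div_iff₀ hx0]
  -- now purely polynomial: bound p below by the truncated series
  have hcoef : (0:ℝ) ≤ 2+(n-2)*x := by nlinarith
  have hLp : (2+(n-2)*x) * (1 - (n-1)*x + (n-1)*((n-1)-1)/2*x^2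
      - (n-1)*((n-1)-1)*((n-1)-2)/6*x^3
      + (n-1)*((n-1)-1)*((n-1)-2)*((n-1)-3)/24*x^4
      - (n-1)*((n-1)-1)*((n-1)-2)*((n-1)-3)*((n-1)-4)/120*x^5)
      ≤ (2+(n-2)*x) * p := mul_le_mul_of_nonneg_left hL hcoef
  -- positivity of factors
  have p1 : (0:ℝ) < n-1 := by linarith
  have p2 : (0:ℝ) < n-2 := by linarith
  have p3 : (0:ℝ) < n-3 := by linarith
  have p4 : (0:ℝ) < n-4 := by linarith
  have p5 : (0:ℝ) < n-5 := by linarith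
  have hc6 : (0:ℝ) < (n-1)*(n-2)^2*(n-3)*(n-4)*(n-5)/120 := by positivity
  have hc4 : (0:ℝ) < n*(n-1)*(n-2)*(n-3)/12 := by positivity
  have hP : (0:ℝ) < (n-1)*((n-2)*((n-3)*(n-4))) := by positivity
  -- h1 : c6 * x ≤ c5
  have e1 : (n-1)*(n-2)^2*(n-3)*(n-4)*(n-5)/120 * x * n
      < (n-1)*(n-2)^2*(n-3)*(n-4)*(n-5)/120 := by
    calc (n-1)*(n-2)^2*(n-3)*(n-4)*(n-5)/120 * x * n
        = (n-1)*(n-2)^2*(n-3)*(n-4)*(n-5)/120 * (x*n) := by ring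
      _ < (n-1)*(n-2)^2*(n-3)*(n-4)*(n-5)/120 * 1 := by
          exact mul_lt_mul_of_pos_left hxn hc6
      _ = (n-1)*(n-2)^2*(n-3)*(n-4)*(n-5)/120 := by ring
  have hq : (n-2)*(n-5) ≤ 3*n^2 := by nlinarith
  have e2 : (n-1)*(n-2)^2*(n-3)*(n-4)*(n-5)/120 ≤ n*(n-1)*(n-2)*(n-3)*(n-4)/40 * n := by
    nlinarith [mul_le_mul_of_nonneg_left hq hP.le]
  have h1 : (n-1)*(n-2)^2*(n-3)*(n-4)*(n-5)/120 * x ≤ n*(n-1)*(n-2)*(n-3)*(n-4)/40 := by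
    have h := e1.trans_le e2
    have := (mul_lt_mul_iff_of_pos_right hn0).mp (by linarith :
      ((n-1)*(n-2)^2*(n-3)*(n-4)*(n-5)/120 * x) * n < (n*(n-1)*(n-2)*(n-3)*(n-4)/40) * n)
    linarith
  -- h2 : c4 * x + (2/25) n^3 ≤ c3
  have e3 : n*(n-1)*(n-2)*(n-3)/12 * x * n < n*(n-1)*(n-2)*(n-3)/12 := by
    calc n*(n-1)*(n-2)*(n-3)/12 * x * n = n*(n-1)*(n-2)*(n-3)/12 * (x*n) := by ring
      _ < n*(n-1)*(n-2)*(n-3)/12 * 1 := mul_lt_mul_of_pos_left hxn hc4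
      _ = n*(n-1)*(n-2)*(n-3)/12 := by ring
  have e4 : n*(n-1)*(n-2)*(n-3)/12 + (2/25)*n^3*n ≤ n*(n-1)*(n-2)/6 * n := by
    nlinarith [mul_pos (mul_pos hn0 p1) p2, mul_pos hn0 hn0]
  have h2 : n*(n-1)*(n-2)*(n-3)/12 * x + (2/25)*n^3 ≤ n*(n-1)*(n-2)/6 := by
    have h := lt_of_lt_of_le (by linarith :
      n*(n-1)*(n-2)*(n-3)/12 * x * n + (2/25)*n^3*n
        < n*(n-1)*(n-2)*(n-3)/12 + (2/25)*n^3*n) e4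
    have := (mul_lt_mul_iff_of_pos_right hn0).mp (by linarith :
      (n*(n-1)*(n-2)*(n-3)/12 * x + (2/25)*n^3) * n < (n*(n-1)*(n-2)/6) * n)
    linarith
  have hx3 : (0:ℝ) ≤ x^3 := by positivity
  have hx5 : (0:ℝ) ≤ x^5 := by positivity
  nlinarith [mul_le_mul_of_nonneg_right h1 hx5, mul_le_mul_of_nonneg_right h2 hx3, hLp]
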